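/- Let a_1 < a_2 < a_3 be positive integers. Then the Betti diagram β(a_1,a_2,a_3) of the codimension-three complete intersection (where β_{i,j} counts i-element subsets of {a_1,a_2,a_3} summing to j) equals z_1 π(d^1) + z_2 π(d^2) + z_3 π(d^3) + z_4 π(d^4) + z_5 π(d^5), where d^1 = (0,a_1,a_1+a_2,a_1+a_2+a_3), d^2 = (0,a_2,a_1+a_2,a_1+a_2+a_3), d^3 = (0,a_2,a_1+a_3,a_1+a_2+a_3), d^4 = (0,a_3,a_1+a_3,a_1+a_2+a_3), d^5 = (0,a_3,a_2+a_3,a_1+a_2+a_3), and z_1 = a_1 a_2 (a_2+a_3), z_2 = a_1 a_2 (a_3−a_1), z_3 = 2 a_1 a_2 (a_1+a_3−a_2), z_4 = a_1 a_2 (a_3−a_1), z_5 = a_1 a_2 (a_2+a_3). -/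

import Mathlib

def bettiCI (c : ℕ) (a : Fin c → ℕ) (i : ℕ) (j : ℤ) : ℚ :=
  (((Finset.univ : Finset (Fin c)).powersetCard i).filter
    (fun T => ∑ k ∈ T, (a k : ℤ) = j)).card

def pureD (c : ℕ) (d : Fin (c + 1) → ℤ) (i : ℕ) (j : ℤ) : ℚ :=
  if h : i < c + 1 then
    if d ⟨i, h⟩ = j then
      ∏ k ∈ Finset.univ.erase ⟨i, h⟩, (1 / |(d ⟨i, h⟩ : ℚ) - (d k : ℚ)|)
    else 0
  else 0

lemma betti0 (a : Fin 3 → ℕ) (j : ℤ) : bettiCI 3 a 0 j = if (0:ℤ) = j then 1 else 0 := by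
  rw [bettiCI, show Finset.powersetCard 0 (Finset.univ : Finset (Fin 3)) = {∅} by decide,
    Finset.filter_singleton]
  split_ifs with h h2 h2 <;> simp_all

lemma betti1 (a : Fin 3 → ℕ) (j : ℤ) : bettiCI 3 a 1 j =
    (if (a 0:ℤ)=j then 1 else 0)+(if (a 1:ℤ)=j then 1 else 0)+(if (a 2:ℤ)=j then 1 else 0) := by
  rw [bettiCI, show Finset.powersetCard 1 (Finset.univ : Finset (Fin 3)) = {{0},{1},{2}} by decide,
    Finset.card_filter,
    show ({{0},{1},{2}} : Finset (Finset (Fin 3))) = insert {0} (insert {1} {{2}}) from rfl,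
    Finset.sum_insert (by decide), Finset.sum_insert (by decide), Finset.sum_singleton,
    Finset.sum_singleton, Finset.sum_singleton, Finset.sum_singleton]
  push_cast
  split_ifs <;> norm_num

lemma betti2 (a : Fin 3 → ℕ) (j : ℤ) : bettiCI 3 a 2 j =
    (if (a 0:ℤ)+(a 1:ℤ)=j then 1 else 0)+(if (a 0:ℤ)+(a 2:ℤ)=j then 1 else 0)+(if (a 1:ℤ)+(a 2:ℤ)=j then 1 else 0) := by
  rw [bettiCI, show Finset.powersetCard 2 (Finset.univ : Finset (Fin 3)) = {{0,1},{0,2},{1,2}} by decide,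
    Finset.card_filter,
    show ({{0,1},{0,2},{1,2}} : Finset (Finset (Fin 3))) = insert {0,1} (insert {0,2} {{1,2}}) from rfl,
    Finset.sum_insert (by decide), Finset.sum_insert (by decide), Finset.sum_singleton,
    Finset.sum_pair (by decide), Finset.sum_pair (by decide), Finset.sum_pair (by decide)]
  push_cast
  split_ifs <;> norm_num

lemma betti3 (a : Fin 3 → ℕ) (j : ℤ) : bettiCI 3 a 3 j =
    if (a 0:ℤ)+(a 1:ℤ)+(a 2:ℤ)=j then 1 else 0 := by
  rw [bettiCI, show Finset.powersetCard 3 (Finset.univ : Finset (Fin 3)) = {{0,1,2}} by decide,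
    Finset.filter_singleton,
    show ({0,1,2} : Finset (Fin 3)) = insert 0 (insert 1 {2}) from rfl,
    Finset.sum_insert (by decide), Finset.sum_insert (by decide), Finset.sum_singleton]
  rw [← add_assoc]
  split_ifs <;> simp

lemma betti_hi (a : Fin 3 → ℕ) (n : ℕ) (j : ℤ) : bettiCI 3 a (n+4) j = 0 := by
  rw [bettiCI, Finset.powersetCard_eq_empty.mpr (by simp)]
  simp

lemma pure0 (d : Fin 4 → ℤ) (h01 : d 0 < d 1) (h12 : d 1 < d 2) (h23 : d 2 < d 3) (j : ℤ) :
    pureD 3 d 0 j = if d 0 = j then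
      1 / (((d 1:ℚ) - d 0) * ((d 2:ℚ) - d 0) * ((d 3:ℚ) - d 0)) else 0 := by
  have q01 : (d 0:ℚ) < d 1 := by exact_mod_cast h01
  have q12 : (d 1:ℚ) < d 2 := by exact_mod_cast h12
  have q23 : (d 2:ℚ) < d 3 := by exact_mod_cast h23
  rw [pureD, dif_pos (by norm_num), show (⟨0, by norm_num⟩ : Fin 4) = 0 from rfl,
    show (Finset.univ.erase (0:Fin 4)) = {1,2,3} by decide,
    Finset.prod_insert (by decide), Finset.prod_insert (by decide), Finset.prod_singleton,
    abs_sub_comm ((d 0:ℚ)) (d 1:ℚ), abs_of_pos (by linarith),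
    abs_sub_comm ((d 0:ℚ)) (d 2:ℚ), abs_of_pos (by linarith),
    abs_sub_comm ((d 0:ℚ)) (d 3:ℚ), abs_of_pos (by linarith)]
  split_ifs <;> [skip; rfl]
  rw [div_mul_div_comm, div_mul_div_comm]
  norm_num
  ring

lemma pure1 (d : Fin 4 → ℤ) (h01 : d 0 < d 1) (h12 : d 1 < d 2) (h23 : d 2 < d 3) (j : ℤ) :
    pureD 3 d 1 j = if d 1 = j then
      1 / (((d 1:ℚ) - d 0) * ((d 2:ℚ) - d 1) * ((d 3:ℚ) - d 1)) else 0 := by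
  have q01 : (d 0:ℚ) < d 1 := by exact_mod_cast h01
  have q12 : (d 1:ℚ) < d 2 := by exact_mod_cast h12
  have q23 : (d 2:ℚ) < d 3 := by exact_mod_cast h23
  rw [pureD, dif_pos (by norm_num), show (⟨1, by norm_num⟩ : Fin 4) = 1 from rfl,
    show (Finset.univ.erase (1:Fin 4)) = {0,2,3} by decide,
    Finset.prod_insert (by decide), Finset.prod_insert (by decide), Finset.prod_singleton,
    abs_of_pos (show (0:ℚ) < (d 1:ℚ) - d 0 by linarith),
    abs_sub_comm ((d 1:ℚ)) (d 2:ℚ), abs_of_pos (by linarith),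
    abs_sub_comm ((d 1:ℚ)) (d 3:ℚ), abs_of_pos (by linarith)]
  split_ifs <;> [skip; rfl]
  rw [div_mul_div_comm, div_mul_div_comm]
  norm_num
  ring

lemma pure2 (d : Fin 4 → ℤ) (h01 : d 0 < d 1) (h12 : d 1 < d 2) (h23 : d 2 < d 3) (j : ℤ) :
    pureD 3 d 2 j = if d 2 = j then
      1 / (((d 2:ℚ) - d 0) * ((d 2:ℚ) - d 1) * ((d 3:ℚ) - d 2)) else 0 := by
  have q01 : (d 0:ℚ) < d 1 := by exact_mod_cast h01
  have q12 : (d 1:ℚ) < d 2 := by exact_mod_cast h12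
  have q23 : (d 2:ℚ) < d 3 := by exact_mod_cast h23
  rw [pureD, dif_pos (by norm_num), show (⟨2, by norm_num⟩ : Fin 4) = 2 from rfl,
    show (Finset.univ.erase (2:Fin 4)) = {0,1,3} by decide,
    Finset.prod_insert (by decide), Finset.prod_insert (by decide), Finset.prod_singleton,
    abs_of_pos (show (0:ℚ) < (d 2:ℚ) - d 0 by linarith),
    abs_of_pos (show (0:ℚ) < (d 2:ℚ) - d 1 by linarith),
    abs_sub_comm ((d 2:ℚ)) (d 3:ℚ), abs_of_pos (by linarith)]
  split_ifs <;> [skip; rfl]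
  rw [div_mul_div_comm, div_mul_div_comm]
  norm_num
  ring

lemma pure3 (d : Fin 4 → ℤ) (h01 : d 0 < d 1) (h12 : d 1 < d 2) (h23 : d 2 < d 3) (j : ℤ) :
    pureD 3 d 3 j = if d 3 = j then
      1 / (((d 3:ℚ) - d 0) * ((d 3:ℚ) - d 1) * ((d 3:ℚ) - d 2)) else 0 := by
  have q01 : (d 0:ℚ) < d 1 := by exact_mod_cast h01
  have q12 : (d 1:ℚ) < d 2 := by exact_mod_cast h12
  have q23 : (d 2:ℚ) < d 3 := by exact_mod_cast h23
  rw [pureD, dif_pos (by norm_num), show (⟨3, by norm_num⟩ : Fin 4) = 3 from rfl,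
    show (Finset.univ.erase (3:Fin 4)) = {0,1,2} by decide,
    Finset.prod_insert (by decide), Finset.prod_insert (by decide), Finset.prod_singleton,
    abs_of_pos (show (0:ℚ) < (d 3:ℚ) - d 0 by linarith),
    abs_of_pos (show (0:ℚ) < (d 3:ℚ) - d 1 by linarith),
    abs_of_pos (show (0:ℚ) < (d 3:ℚ) - d 2 by linarith)]
  split_ifs <;> [skip; rfl]
  rw [div_mul_div_comm, div_mul_div_comm]
  norm_num
  ring

lemma pure_hi (d : Fin 4 → ℤ) (n : ℕ) (j : ℤ) : pureD 3 d (n+4) j = 0 := by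
  rw [pureD, dif_neg (by omega)]

lemma pure0' (x0 x1 x2 x3 : ℤ) (h01 : x0 < x1) (h12 : x1 < x2) (h23 : x2 < x3) (j : ℤ) :
    pureD 3 ![x0,x1,x2,x3] 0 j =
      if x0 = j then 1 / (((x1:ℚ) - x0) * ((x2:ℚ) - x0) * ((x3:ℚ) - x0)) else 0 := by
  rw [pure0 _ (by simpa using h01) (by simpa using h12) (by simpa using h23)]
  norm_num
  simp only [Matrix.cons_val_two, Matrix.cons_val_three, Matrix.vecHead, Matrix.vecTail, Function.comp_apply, Fin.succ_zero_eq_one, Fin.succ_one_eq_two, Matrix.cons_val_one, Matrix.cons_val_zero]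

lemma pure1' (x0 x1 x2 x3 : ℤ) (h01 : x0 < x1) (h12 : x1 < x2) (h23 : x2 < x3) (j : ℤ) :
    pureD 3 ![x0,x1,x2,x3] 1 j =
      if x1 = j then 1 / (((x1:ℚ) - x0) * ((x2:ℚ) - x1) * ((x3:ℚ) - x1)) else 0 := by
  rw [pure1 _ (by simpa using h01) (by simpa using h12) (by simpa using h23)]
  norm_num
  simp only [Matrix.cons_val_two, Matrix.cons_val_three, Matrix.vecHead, Matrix.vecTail, Function.comp_apply, Fin.succ_zero_eq_one, Fin.succ_one_eq_two, Matrix.cons_val_one, Matrix.cons_val_zero]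

lemma pure2' (x0 x1 x2 x3 : ℤ) (h01 : x0 < x1) (h12 : x1 < x2) (h23 : x2 < x3) (j : ℤ) :
    pureD 3 ![x0,x1,x2,x3] 2 j =
      if x2 = j then 1 / (((x2:ℚ) - x0) * ((x2:ℚ) - x1) * ((x3:ℚ) - x2)) else 0 := by
  rw [pure2 _ (by simpa using h01) (by simpa using h12) (by simpa using h23)]
  norm_num
  simp only [Matrix.cons_val_two, Matrix.cons_val_three, Matrix.vecHead, Matrix.vecTail, Function.comp_apply, Fin.succ_zero_eq_one, Fin.succ_one_eq_two, Matrix.cons_val_one, Matrix.cons_val_zero]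
  congr

lemma pure3' (x0 x1 x2 x3 : ℤ) (h01 : x0 < x1) (h12 : x1 < x2) (h23 : x2 < x3) (j : ℤ) :
    pureD 3 ![x0,x1,x2,x3] 3 j =
      if x3 = j then 1 / (((x3:ℚ) - x0) * ((x3:ℚ) - x1) * ((x3:ℚ) - x2)) else 0 := by
  rw [pure3 _ (by simpa using h01) (by simpa using h12) (by simpa using h23)]
  norm_num
  simp only [Matrix.cons_val_two, Matrix.cons_val_three, Matrix.vecHead, Matrix.vecTail, Function.comp_apply, Fin.succ_zero_eq_one, Fin.succ_one_eq_two, Matrix.cons_val_one, Matrix.cons_val_zero]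
  congr
section
variable (A B C : ℚ)

lemma id_row0 (hA : 0 < A) (hAB : A < B) (hBC : B < C) :
    (1:ℚ) = A*B*(B+C) * (1/A * (1/(A+B)) * (1/(A+B+C))) + A*B*(C-A) * (1/B * (1/(A+B)) * (1/(A+B+C)))
      + 2*A*B*(A+C-B) * (1/B * (1/(A+C)) * (1/(A+B+C))) + A*B*(C-A) * (1/C * (1/(A+C)) * (1/(A+B+C)))
      + A*B*(B+C) * (1/C * (1/(B+C)) * (1/(A+B+C))) := by
  have h1 : A ≠ 0 := hA.ne'
  have h2 : B ≠ 0 := by linarith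
  have h3 : C ≠ 0 := by linarith
  have h4 : A+B ≠ 0 := by linarith
  have h5 : A+C ≠ 0 := by linarith
  have h6 : B+C ≠ 0 := by linarith
  have h7 : A+B+C ≠ 0 := by linarith
  field_simp
  ring

lemma id_row1A (hA : 0 < A) (hAB : A < B) (hBC : B < C) :
    (1:ℚ) = A*B*(B+C) * (1/A * (1/B) * (1/(B+C))) := by
  have h1 : A ≠ 0 := hA.ne'
  have h2 : B ≠ 0 := by linarith
  have h6 : B+C ≠ 0 := by linarith
  field_simp

lemma id_row1B (hA : 0 < A) (hAB : A < B) (hBC : B < C) :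
    (1:ℚ) = A*B*(C-A) * (1/B * (1/A) * (1/(A+C))) + 2*A*B*(A+C-B) * (1/B * (1/(A+C-B)) * (1/(A+C))) := by
  have h1 : A ≠ 0 := hA.ne'
  have h2 : B ≠ 0 := by linarith
  have h5 : A+C ≠ 0 := by linarith
  have h8 : A+C-B ≠ 0 := by linarith
  field_simp
  ring

lemma id_row1C (hA : 0 < A) (hAB : A < B) (hBC : B < C) :
    (1:ℚ) = A*B*(C-A) * (1/C * (1/A) * (1/(A+B))) + A*B*(B+C) * (1/C * (1/B) * (1/(A+B))) := by
  have h1 : A ≠ 0 := hA.ne'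
  have h2 : B ≠ 0 := by linarith
  have h3 : C ≠ 0 := by linarith
  have h4 : A+B ≠ 0 := by linarith
  field_simp
  ring

lemma id_row2AB (hA : 0 < A) (hAB : A < B) (hBC : B < C) :
    (1:ℚ) = A*B*(B+C) * (1/(A+B) * (1/B) * (1/C)) + A*B*(C-A) * (1/(A+B) * (1/A) * (1/C)) := by
  have h1 : A ≠ 0 := hA.ne'
  have h2 : B ≠ 0 := by linarith
  have h3 : C ≠ 0 := by linarith
  have h4 : A+B ≠ 0 := by linarith
  field_simp
  ring

lemma id_row2AC (hA : 0 < A) (hAB : A < B) (hBC : B < C) :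
    (1:ℚ) = 2*A*B*(A+C-B) * (1/(A+C) * (1/(A+C-B)) * (1/B)) + A*B*(C-A) * (1/(A+C) * (1/A) * (1/B)) := by
  have h1 : A ≠ 0 := hA.ne'
  have h2 : B ≠ 0 := by linarith
  have h5 : A+C ≠ 0 := by linarith
  have h8 : A+C-B ≠ 0 := by linarith
  field_simp
  ring

lemma id_row2BC (hA : 0 < A) (hAB : A < B) (hBC : B < C) :
    (1:ℚ) = A*B*(B+C) * (1/(B+C) * (1/B) * (1/A)) := by
  have h1 : A ≠ 0 := hA.ne'
  have h2 : B ≠ 0 := by linarith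
  have h6 : B+C ≠ 0 := by linarith
  field_simp

lemma id_row3 (hA : 0 < A) (hAB : A < B) (hBC : B < C) :
    (1:ℚ) = A*B*(B+C) * (1/(A+B+C) * (1/(B+C)) * (1/C)) + A*B*(C-A) * (1/(A+B+C) * (1/(A+C)) * (1/C))
      + 2*A*B*(A+C-B) * (1/(A+B+C) * (1/(A+C)) * (1/B)) + A*B*(C-A) * (1/(A+B+C) * (1/(A+B)) * (1/B))
      + A*B*(B+C) * (1/(A+B+C) * (1/(A+B)) * (1/A)) := by
  have h1 : A ≠ 0 := hA.ne'
  have h2 : B ≠ 0 := by linarith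
  have h3 : C ≠ 0 := by linarith
  have h4 : A+B ≠ 0 := by linarith
  have h5 : A+C ≠ 0 := by linarith
  have h6 : B+C ≠ 0 := by linarith
  have h7 : A+B+C ≠ 0 := by linarith
  field_simp
  ring
end

theorem codim_three_decomposition (a1 a2 a3 : ℕ)
    (h1 : 0 < a1) (h12 : a1 < a2) (h23 : a2 < a3) :
    ∀ (i : ℕ) (j : ℤ),
      bettiCI 3 ![a1, a2, a3] i j =
        (a1 * a2 * (a2 + a3) : ℚ) *
            pureD 3 ![0, (a1 : ℤ), a1 + a2, a1 + a2 + a3] i j +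
          (a1 * a2 * (a3 - a1) : ℚ) *
            pureD 3 ![0, (a2 : ℤ), a1 + a2, a1 + a2 + a3] i j +
          (2 * a1 * a2 * (a1 + a3 - a2) : ℚ) *
            pureD 3 ![0, (a2 : ℤ), a1 + a3, a1 + a2 + a3] i j +
          (a1 * a2 * (a3 - a1) : ℚ) *
            pureD 3 ![0, (a3 : ℤ), a1 + a3, a1 + a2 + a3] i j +
          (a1 * a2 * (a2 + a3) : ℚ) *
            pureD 3 ![0, (a3 : ℤ), a2 + a3, a1 + a2 + a3] i j := by
  intro i j
  have qa1 : (0:ℚ) < a1 := by exact_mod_cast h1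
  have q12 : (a1:ℚ) < a2 := by exact_mod_cast h12
  have q23 : (a2:ℚ) < a3 := by exact_mod_cast h23
  match i with
  | 0 =>
    rw [betti0, pure0' _ _ _ _ (by omega) (by omega) (by omega),
      pure0' _ _ _ _ (by omega) (by omega) (by omega), pure0' _ _ _ _ (by omega) (by omega) (by omega),
      pure0' _ _ _ _ (by omega) (by omega) (by omega), pure0' _ _ _ _ (by omega) (by omega) (by omega)]
    norm_num
    split_ifs <;> first
      | (exfalso; omega)
      | linear_combination (id_row0 (a1:ℚ) a2 a3 qa1 q12 q23)
      | norm_num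
  | 1 =>
    rw [betti1, pure1' _ _ _ _ (by omega) (by omega) (by omega),
      pure1' _ _ _ _ (by omega) (by omega) (by omega), pure1' _ _ _ _ (by omega) (by omega) (by omega),
      pure1' _ _ _ _ (by omega) (by omega) (by omega), pure1' _ _ _ _ (by omega) (by omega) (by omega)]
    rw [show (![a1, a2, a3] : Fin 3 → ℕ) 0 = a1 from rfl, show (![a1, a2, a3] : Fin 3 → ℕ) 1 = a2 from rfl,
      show (![a1, a2, a3] : Fin 3 → ℕ) 2 = a3 from rfl]
    norm_num
    split_ifs <;> first
      | (exfalso; omega)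
      | linear_combination (id_row1A (a1:ℚ) a2 a3 qa1 q12 q23)
      | linear_combination (id_row1B (a1:ℚ) a2 a3 qa1 q12 q23)
      | linear_combination (id_row1C (a1:ℚ) a2 a3 qa1 q12 q23)
      | norm_num
  | 2 =>
    rw [betti2, pure2' _ _ _ _ (by omega) (by omega) (by omega),
      pure2' _ _ _ _ (by omega) (by omega) (by omega), pure2' _ _ _ _ (by omega) (by omega) (by omega),
      pure2' _ _ _ _ (by omega) (by omega) (by omega), pure2' _ _ _ _ (by omega) (by omega) (by omega)]
    rw [show (![a1, a2, a3] : Fin 3 → ℕ) 0 = a1 from rfl, show (![a1, a2, a3] : Fin 3 → ℕ) 1 = a2 from rfl,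
      show (![a1, a2, a3] : Fin 3 → ℕ) 2 = a3 from rfl]
    norm_num
    split_ifs <;> first
      | (exfalso; omega)
      | linear_combination (id_row2AB (a1:ℚ) a2 a3 qa1 q12 q23)
      | linear_combination (id_row2AC (a1:ℚ) a2 a3 qa1 q12 q23)
      | linear_combination (id_row2BC (a1:ℚ) a2 a3 qa1 q12 q23)
      | norm_num
  | 3 =>
    rw [betti3, pure3' _ _ _ _ (by omega) (by omega) (by omega),
      pure3' _ _ _ _ (by omega) (by omega) (by omega), pure3' _ _ _ _ (by omega) (by omega) (by omega),
      pure3' _ _ _ _ (by omega) (by omega) (by omega), pure3' _ _ _ _ (by omega) (by omega) (by omega)]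
    rw [show (![a1, a2, a3] : Fin 3 → ℕ) 0 = a1 from rfl, show (![a1, a2, a3] : Fin 3 → ℕ) 1 = a2 from rfl,
      show (![a1, a2, a3] : Fin 3 → ℕ) 2 = a3 from rfl]
    norm_num
    split_ifs <;> first
      | (exfalso; omega)
      | linear_combination (id_row3 (a1:ℚ) a2 a3 qa1 q12 q23)
      | norm_num
  | (n+4) =>
    rw [betti_hi, pure_hi, pure_hi, pure_hi, pure_hi, pure_hi]
    norm_num
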